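/- arXiv:1705.06553 — 3 statements merged into one kernel-verified Lean document; each statement's English description precedes it below -/
import Mathlib

section
/- Let F be an existentially closed (Z ⋊ Z)-field (a field with automorphisms σ, τ satisfying στ = τσ⁻¹ that is existentially closed in the class of such fields). Then for every n > 2 there exists c ∈ F such that τ(c) = −c, c + σ(c) + ... + σ^{n−1}(c) = 0, and c + σ(c) + ... + σ^{k−1}(c) ≠ 0 for all 0 < k < n. -/
universe u

noncomputable section

/-- A finite system of difference-polynomial conditions over `K` in `k` variables:
equations `f = 0` for `f ∈ polys` and inequations `g ≠ 0` for `g ∈ negs`, where the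
polynomials are in the transforms `σᵃτᵇ(xᵢ)` of the variables, the finitely many
transforms used being recorded by `words`. This is the quantifier-free data of the
language of `(ℤ ⋊ ℤ)`-fields. -/
structure ZZSystem (K : Type u) [Field K] (k : ℕ) where
  nwords : ℕ
  words : Fin nwords → ℤ × ℤ
  polys : List (MvPolynomial (Fin k × Fin nwords) K)
  negs : List (MvPolynomial (Fin k × Fin nwords) K)

/-- Satisfaction of a system in a `(ℤ ⋊ ℤ)`-field `(L, σ, τ)` containing `K` via `ι`,
by a tuple `x`. -/
def ZZSystem.Sat {K : Type u} [Field K] {k : ℕ} (S : ZZSystem K k)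
    {L : Type u} [Field L] (ι : K →+* L) (σ τ : RingAut L) (x : Fin k → L) : Prop :=
  (∀ f ∈ S.polys,
    MvPolynomial.eval₂ ι
      (fun p => (σ ^ (S.words p.2).1 * τ ^ (S.words p.2).2) (x p.1)) f = 0) ∧
  (∀ g ∈ S.negs,
    MvPolynomial.eval₂ ι
      (fun p => (σ ^ (S.words p.2).1 * τ ^ (S.words p.2).2) (x p.1)) g ≠ 0)

/-- Solvability of a system. -/
def ZZSystem.SolvableIn {K : Type u} [Field K] {k : ℕ} (S : ZZSystem K k)
    {L : Type u} [Field L] (ι : K →+* L) (σ τ : RingAut L) : Prop :=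
  ∃ x : Fin k → L, S.Sat ι σ τ x

/-- A `(ℤ ⋊ ℤ)`-field `(K, σ, τ)` (so `στ = τσ⁻¹`) is existentially closed if every
finite quantifier-free system over `K` that is solvable in some `(ℤ ⋊ ℤ)`-field extension
of `(K, σ, τ)` is already solvable in `K`. -/
def IsECZZField (K : Type u) [Field K] (σ τ : RingAut K) : Prop :=
  σ * τ = τ * σ⁻¹ ∧
    ∀ (L : Type u) [Field L] (ι : K →+* L) (σL τL : RingAut L),
      σL * τL = τL * σL⁻¹ →
      (∀ a : K, σL (ι a) = ι (σ a)) → (∀ a : K, τL (ι a) = ι (τ a)) →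
      ∀ (k : ℕ) (S : ZZSystem K k),
        S.SolvableIn ι σL τL → S.SolvableIn (RingHom.id K) σ τ

open MvPolynomial in
section
namespace ZZaux
variable (F : Type u) [Field F] (m : ℕ)

def t (i : ZMod (m+1)) : MvPolynomial (Fin m) F :=
  if h : i.val < m then MvPolynomial.X ⟨i.val, h⟩ else - ∑ j, MvPolynomial.X j

variable {F m}

lemma t_natCast (j : Fin m) : t F m ((j : ℕ) : ZMod (m+1)) = MvPolynomial.X j := by
  have hv : (((j : ℕ) : ZMod (m+1))).val = (j : ℕ) :=
    ZMod.val_natCast_of_lt (lt_trans j.isLt (Nat.lt_succ_self m))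
  rw [t, dif_pos (by rw [hv]; exact j.isLt)]
  congr 1
  exact Fin.ext (by simp [hv])

lemma t_last : t F m ((m : ℕ) : ZMod (m+1)) = - ∑ j, MvPolynomial.X j := by
  have hv : (((m : ℕ) : ZMod (m+1))).val = m := ZMod.val_natCast_of_lt (Nat.lt_succ_self m)
  rw [t, dif_neg (by rw [hv]; exact lt_irrefl m)]

lemma sum_t : (∑ i : ZMod (m+1), t F m i) = 0 := by
  have hb : Function.Bijective (fun k : Fin (m+1) => ((k : ℕ) : ZMod (m+1))) := by
    rw [Fintype.bijective_iff_surjective_and_card]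
    constructor
    · intro i
      exact ⟨⟨i.val, i.val_lt⟩, by simp [ZMod.natCast_val, ZMod.cast_id]⟩
    · simp [ZMod.card]
  rw [← Function.Bijective.sum_comp hb (fun i => t F m i)]
  rw [Fin.sum_univ_castSucc]
  have h1 : ∀ j : Fin m, t F m (((j.castSucc : Fin (m+1)) : ℕ) : ZMod (m+1)) = MvPolynomial.X j := by
    intro j; rw [Fin.coe_castSucc, t_natCast]
  simp only [Function.comp, h1]
  rw [show ((Fin.last m : ℕ) : ZMod (m+1)) = ((m : ℕ) : ZMod (m+1)) by norm_num, t_last]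
  ring

end ZZaux

namespace ZZaux2
open ZZaux
variable {F : Type u} [Field F] {m : ℕ}

/-- Semilinear substitution: `C a ↦ C (φ a)`, `X j ↦ C c * t (u j)`. -/
def U (φ : F →+* F) (c : F) (u : ZMod (m+1) → ZMod (m+1)) :
    MvPolynomial (Fin m) F →+* MvPolynomial (Fin m) F :=
  MvPolynomial.eval₂Hom ((MvPolynomial.C : F →+* _).comp φ)
    (fun j : Fin m => MvPolynomial.C c * t F m (u ((j : ℕ) : ZMod (m+1))))

@[simp] lemma U_C (φ : F →+* F) (c : F) (u : ZMod (m+1) → ZMod (m+1)) (a : F) :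
    U φ c u (MvPolynomial.C a) = MvPolynomial.C (φ a) := by simp [U]

@[simp] lemma U_X (φ : F →+* F) (c : F) (u : ZMod (m+1) → ZMod (m+1)) (j : Fin m) :
    U φ c u (MvPolynomial.X j) = MvPolynomial.C c * t F m (u ((j : ℕ) : ZMod (m+1))) := by
  simp [U]

lemma U_t (φ : F →+* F) (c : F) {u : ZMod (m+1) → ZMod (m+1)} (hu : Function.Bijective u)
    (i : ZMod (m+1)) : U φ c u (t F m i) = MvPolynomial.C c * t F m (u i) := by
  by_cases h : i.val < m
  · have : i = (((⟨i.val, h⟩ : Fin m) : ℕ) : ZMod (m+1)) := by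
      simp [ZMod.natCast_val, ZMod.cast_id]
    rw [this, t_natCast, U_X]
  · -- i = m mod (m+1)
    have hi : i = ((m : ℕ) : ZMod (m+1)) := by
      have hv : i.val = m := le_antisymm (Nat.lt_succ_iff.mp i.val_lt) (le_of_not_gt h)
      have := (ZMod.natCast_rightInverse (n := m+1) i)
      rw [← this, hv]
    subst hi
    rw [t_last]
    have key : (∑ j : Fin m, t F m (u ((j : ℕ) : ZMod (m+1)))) = - t F m (u ((m : ℕ) : ZMod (m+1))) := by
      have h0 : (∑ i : ZMod (m+1), t F m (u i)) = 0 := by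
        rw [Function.Bijective.sum_comp hu (fun i => t F m i)]; exact sum_t
      have hb : Function.Bijective (fun k : Fin (m+1) => ((k : ℕ) : ZMod (m+1))) := by
        rw [Fintype.bijective_iff_surjective_and_card]
        exact ⟨fun i => ⟨⟨i.val, i.val_lt⟩, by simp [ZMod.natCast_val, ZMod.cast_id]⟩,
          by simp [ZMod.card]⟩
      rw [← Function.Bijective.sum_comp hb (fun i => t F m (u i))] at h0
      rw [Fin.sum_univ_castSucc] at h0
      simp only [Function.comp, Fin.coe_castSucc, Fin.val_last] at h0
      linear_combination h0
    rw [map_neg, map_sum]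
    simp only [U_X]
    rw [← Finset.mul_sum, key]
    ring

end ZZaux2

namespace ZZaux3
open ZZaux ZZaux2
variable {F : Type u} [Field F]

/-- Build a ring automorphism from mutually inverse ring homs. -/
def mkAut {A : Type u} [CommRing A] (f g : A →+* A) (h1 : g.comp f = RingHom.id A)
    (h2 : f.comp g = RingHom.id A) : RingAut A :=
  { toFun := f, invFun := g,
    left_inv := fun x => by
      have := RingHom.congr_fun h1 x; simpa using this,
    right_inv := fun x => by
      have := RingHom.congr_fun h2 x; simpa using this,
    map_mul' := map_mul f, map_add' := map_add f }

@[simp] lemma mkAut_apply {A : Type u} [CommRing A] (f g : A →+* A) (h1) (h2) (x : A) :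
    mkAut f g h1 h2 x = f x := rfl

variable (m : ℕ) (σ τ : RingAut F)

lemma aut_inv_cancel (a : F) : σ⁻¹ (σ a) = a := σ.symm_apply_apply a
lemma aut_cancel_inv (a : F) : σ (σ⁻¹ a) = a := σ.apply_symm_apply a

lemma bij_add_one : Function.Bijective (fun i : ZMod (m+1) => i + 1) :=
  (Equiv.addRight (1 : ZMod (m+1))).bijective
lemma bij_sub_one : Function.Bijective (fun i : ZMod (m+1) => i - 1) :=
  (Equiv.subRight (1 : ZMod (m+1))).bijective
lemma bij_neg : Function.Bijective (fun i : ZMod (m+1) => -i) :=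
  (Equiv.neg (ZMod (m+1))).bijective

/-- σ on the polynomial ring: `t i ↦ t (i+1)`. -/
def Eσ : RingAut (MvPolynomial (Fin m) F) :=
  mkAut (U σ.toRingHom 1 (fun i : ZMod (m+1) => i + 1))
    (U (σ⁻¹ : RingAut F).toRingHom 1 (fun i : ZMod (m+1) => i - 1))
    (by
      apply MvPolynomial.ringHom_ext
      · intro a
        simp only [RingHom.coe_comp, Function.comp_apply, U_C, RingHom.id_apply,
          RingEquiv.toRingHom_eq_coe, RingEquiv.coe_toRingHom]
        exact congrArg MvPolynomial.C (aut_inv_cancel σ a)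
      · intro j
        simp only [RingHom.coe_comp, Function.comp_apply, U_X, RingHom.id_apply, map_one,
          one_mul, map_mul, U_C, RingEquiv.toRingHom_eq_coe, RingEquiv.coe_toRingHom]
        rw [U_t _ _ (bij_sub_one m)]
        simp only [add_sub_cancel_right, t_natCast, map_one, one_mul])
    (by
      apply MvPolynomial.ringHom_ext
      · intro a
        simp only [RingHom.coe_comp, Function.comp_apply, U_C, RingHom.id_apply,
          RingEquiv.toRingHom_eq_coe, RingEquiv.coe_toRingHom]
        exact congrArg MvPolynomial.C (aut_cancel_inv σ a)
      · intro j
        simp only [RingHom.coe_comp, Function.comp_apply, U_X, RingHom.id_apply, map_one,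
          one_mul, map_mul, U_C, RingEquiv.toRingHom_eq_coe, RingEquiv.coe_toRingHom]
        rw [U_t _ _ (bij_add_one m)]
        simp only [sub_add_cancel, t_natCast, map_one, one_mul])

/-- τ on the polynomial ring: `t i ↦ - t (-i)`. -/
def Eτ : RingAut (MvPolynomial (Fin m) F) :=
  mkAut (U τ.toRingHom (-1) (fun i : ZMod (m+1) => -i))
    (U (τ⁻¹ : RingAut F).toRingHom (-1) (fun i : ZMod (m+1) => -i))
    (by
      apply MvPolynomial.ringHom_ext
      · intro a
        simp only [RingHom.coe_comp, Function.comp_apply, U_C, RingHom.id_apply,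
          RingEquiv.toRingHom_eq_coe, RingEquiv.coe_toRingHom]
        exact congrArg MvPolynomial.C (aut_inv_cancel τ a)
      · intro j
        simp only [RingHom.coe_comp, Function.comp_apply, U_X, RingHom.id_apply,
          map_mul, U_C, RingEquiv.toRingHom_eq_coe, RingEquiv.coe_toRingHom]
        rw [U_t _ _ (bij_neg m)]
        simp only [neg_neg, t_natCast, map_neg, map_one]
        ring
    )
    (by
      apply MvPolynomial.ringHom_ext
      · intro a
        simp only [RingHom.coe_comp, Function.comp_apply, U_C, RingHom.id_apply,
          RingEquiv.toRingHom_eq_coe, RingEquiv.coe_toRingHom]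
        exact congrArg MvPolynomial.C (aut_cancel_inv τ a)
      · intro j
        simp only [RingHom.coe_comp, Function.comp_apply, U_X, RingHom.id_apply,
          map_mul, U_C, RingEquiv.toRingHom_eq_coe, RingEquiv.coe_toRingHom]
        rw [U_t _ _ (bij_neg m)]
        simp only [neg_neg, t_natCast, map_neg, map_one]
        ring)

lemma Eσ_t (i : ZMod (m+1)) : Eσ m σ (t F m i) = t F m (i + 1) := by
  rw [Eσ, mkAut_apply, U_t _ _ (bij_add_one m)]; simp

lemma Eτ_t (i : ZMod (m+1)) : Eτ m τ (t F m i) = - t F m (-i) := by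
  rw [Eτ, mkAut_apply, U_t _ _ (bij_neg m)]
  simp only [map_neg, map_one]; ring

lemma Eσ_C (a : F) : Eσ m σ (MvPolynomial.C a) = MvPolynomial.C (σ a) := by
  rw [Eσ, mkAut_apply]; simp
lemma Eτ_C (a : F) : Eτ m τ (MvPolynomial.C a) = MvPolynomial.C (τ a) := by
  rw [Eτ, mkAut_apply]; simp

lemma Eσ_inv_t (i : ZMod (m+1)) : (Eσ m σ)⁻¹ (t F m i) = t F m (i - 1) := by
  apply (Eσ m σ).injective
  show Eσ m σ ((Eσ m σ).symm _) = _
  rw [RingEquiv.apply_symm_apply, Eσ_t]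
  ring_nf

lemma Eσ_inv_C (a : F) : (Eσ m σ)⁻¹ (MvPolynomial.C a) = MvPolynomial.C (σ⁻¹ a) := by
  apply (Eσ m σ).injective
  show Eσ m σ ((Eσ m σ).symm _) = _
  rw [RingEquiv.apply_symm_apply, Eσ_C]
  rw [aut_cancel_inv]

lemma rel_poly (hrel : σ * τ = τ * σ⁻¹) :
    Eσ m σ * Eτ m τ = Eτ m τ * (Eσ m σ)⁻¹ := by
  apply RingEquiv.ext
  intro p
  show (Eσ m σ) ((Eτ m τ) p) = (Eτ m τ) ((Eσ m σ)⁻¹ p)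
  have h : ((Eσ m σ).toRingHom.comp (Eτ m τ).toRingHom : MvPolynomial (Fin m) F →+* _) =
      ((Eτ m τ).toRingHom.comp ((Eσ m σ)⁻¹ : RingAut (MvPolynomial (Fin m) F)).toRingHom) := by
    apply MvPolynomial.ringHom_ext
    · intro a
      simp only [RingHom.coe_comp, Function.comp_apply, RingEquiv.toRingHom_eq_coe,
        RingEquiv.coe_toRingHom]
      rw [Eτ_C, Eσ_C, Eσ_inv_C, Eτ_C]
      have hfa : σ (τ a) = τ (σ⁻¹ a) := by
        rw [show σ (τ a) = (σ * τ) a from rfl, hrel]; rfl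
      exact congrArg MvPolynomial.C hfa
    · intro j
      simp only [RingHom.coe_comp, Function.comp_apply, RingEquiv.toRingHom_eq_coe,
        RingEquiv.coe_toRingHom]
      rw [← t_natCast (F := F) j]
      rw [Eτ_t, Eσ_inv_t, map_neg, Eσ_t, Eτ_t]
      ring_nf
  have := RingHom.congr_fun h p
  simpa using this

end ZZaux3

namespace ZZaux4
open ZZaux ZZaux2 ZZaux3

variable {F : Type u} [Field F] (m : ℕ) (σ τ : RingAut F)

abbrev R (F : Type u) [Field F] (m : ℕ) := MvPolynomial (Fin m) F
abbrev K (F : Type u) [Field F] (m : ℕ) := FractionRing (R F m)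

/-- Lift of `Eσ` to the fraction field. -/
def σK : RingAut (K F m) := IsFractionRing.ringEquivOfRingEquiv (Eσ m σ)
def τK : RingAut (K F m) := IsFractionRing.ringEquivOfRingEquiv (Eτ m τ)

lemma σK_alg (p : R F m) : σK m σ (algebraMap (R F m) (K F m) p) =
    algebraMap (R F m) (K F m) (Eσ m σ p) :=
  IsFractionRing.ringEquivOfRingEquiv_algebraMap _ p

lemma τK_alg (p : R F m) : τK m τ (algebraMap (R F m) (K F m) p) =
    algebraMap (R F m) (K F m) (Eτ m τ p) :=
  IsFractionRing.ringEquivOfRingEquiv_algebraMap _ p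

lemma σK_inv_alg (p : R F m) : (σK m σ)⁻¹ (algebraMap (R F m) (K F m) p) =
    algebraMap (R F m) (K F m) ((Eσ m σ)⁻¹ p) := by
  apply (σK m σ).injective
  show σK m σ ((σK m σ).symm _) = _
  rw [RingEquiv.apply_symm_apply, σK_alg]
  congr 1
  exact ((Eσ m σ).apply_symm_apply p).symm

lemma rel_K (hrel : σ * τ = τ * σ⁻¹) : σK m σ * τK m τ = τK m τ * (σK m σ)⁻¹ := by
  apply RingEquiv.ext
  intro z
  show σK m σ (τK m τ z) = τK m τ ((σK m σ)⁻¹ z)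
  have h : ((σK m σ).toRingHom.comp (τK m τ).toRingHom : K F m →+* K F m) =
      ((τK m τ).toRingHom.comp ((σK m σ)⁻¹ : RingAut (K F m)).toRingHom) := by
    apply IsLocalization.ringHom_ext (nonZeroDivisors (R F m))
    apply RingHom.ext
    intro p
    simp only [RingHom.coe_comp, Function.comp_apply, RingEquiv.toRingHom_eq_coe,
      RingEquiv.coe_toRingHom]
    rw [τK_alg, σK_alg, σK_inv_alg, τK_alg]
    refine congrArg (algebraMap (R F m) (K F m)) ?_
    have := rel_poly m σ τ hrel
    calc Eσ m σ (Eτ m τ p) = (Eσ m σ * Eτ m τ) p := rfl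
      _ = (Eτ m τ * (Eσ m σ)⁻¹) p := by rw [this]
      _ = Eτ m τ ((Eσ m σ)⁻¹ p) := rfl
  have := RingHom.congr_fun h z
  simpa using this

lemma σK_pow_t (j : ℕ) (i : ZMod (m+1)) :
    ((σK m σ) ^ j) (algebraMap (R F m) (K F m) (t F m i)) =
      algebraMap (R F m) (K F m) (t F m (i + j)) := by
  induction j generalizing i with
  | zero =>
    rw [pow_zero]
    norm_num
  | succ j ih =>
    have hstep : ((σK m σ) ^ (j+1)) (algebraMap (R F m) (K F m) (t F m i)) =
        ((σK m σ) ^ j) (σK m σ (algebraMap (R F m) (K F m) (t F m i))) := by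
      rw [pow_succ]; rfl
    rw [hstep, σK_alg, Eσ_t, ih]
    push_cast
    ring_nf

lemma τK_t (i : ZMod (m+1)) :
    τK m τ (algebraMap (R F m) (K F m) (t F m i)) =
      - algebraMap (R F m) (K F m) (t F m (-i)) := by
  rw [τK_alg, Eτ_t, RingHom.map_neg]

end ZZaux4

namespace ZZaux5
open ZZaux ZZaux2 ZZaux3 ZZaux4

variable {F : Type u} [Field F] {m : ℕ}

lemma t_natCast' (j : ℕ) (hj : j < m) :
    t F m ((j : ℕ) : ZMod (m+1)) = MvPolynomial.X (⟨j, hj⟩ : Fin m) := by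
  have := t_natCast (F := F) (⟨j, hj⟩ : Fin m)
  simpa using this

lemma sum_range_t : (∑ j ∈ Finset.range (m+1), t F m ((j : ℕ) : ZMod (m+1))) = 0 := by
  rw [← Fin.sum_univ_eq_sum_range (fun j : ℕ => t F m ((j : ℕ) : ZMod (m+1))) (m+1)]
  rw [← sum_t (F := F) (m := m)]
  exact Fintype.sum_bijective (fun k : Fin (m+1) => ((k : ℕ) : ZMod (m+1)))
    (by
      rw [Fintype.bijective_iff_surjective_and_card]
      exact ⟨fun i => ⟨⟨i.val, i.val_lt⟩, by simp [ZMod.natCast_val, ZMod.cast_id]⟩,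
        by simp [ZMod.card]⟩)
    _ _ (fun k => rfl)

lemma partial_sum_t_ne (k : ℕ) (hk1 : 0 < k) (hk : k ≤ m) :
    (∑ j ∈ Finset.range k, t F m ((j : ℕ) : ZMod (m+1))) ≠ 0 := by
  intro h
  have hm0 : 0 < m := lt_of_lt_of_le hk1 hk
  have happ := congrArg (MvPolynomial.eval (fun i : Fin m => if i = ⟨0, hm0⟩ then (1:F) else 0)) h
  rw [map_sum, map_zero] at happ
  have hterm : ∀ j ∈ Finset.range k,
      MvPolynomial.eval (fun i : Fin m => if i = ⟨0, hm0⟩ then (1:F) else 0)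
        (t F m ((j : ℕ) : ZMod (m+1))) = if j = 0 then 1 else 0 := by
    intro j hj
    rw [Finset.mem_range] at hj
    rw [t_natCast' j (lt_of_lt_of_le hj hk), MvPolynomial.eval_X]
    by_cases h0 : j = 0
    · subst h0; simp
    · rw [if_neg (by simp [Fin.ext_iff, h0]), if_neg h0]
  rw [Finset.sum_congr rfl hterm] at happ
  have hsum : (∑ j ∈ Finset.range k, if j = 0 then (1:F) else 0) = 1 := by
    simp [Finset.mem_range, hk1]
  have hone : (1:F) = 0 := by rw [← hsum]; exact happ
  exact one_ne_zero hone

/-- The words: `σ^w` for `w ≤ m`, and `τ` for the last index. -/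
abbrev wds (m : ℕ) : Fin (m+2) → ℤ × ℤ :=
  fun w => if (w : ℕ) ≤ m then (((w : ℕ) : ℤ), 0) else (0, 1)

def q (F : Type u) [Field F] (m k : ℕ) : MvPolynomial (Fin 1 × Fin (m+2)) F :=
  ∑ w : Fin (m+2), if (w : ℕ) < k then MvPolynomial.X ((0 : Fin 1), w) else 0

def pτ (F : Type u) [Field F] (m : ℕ) : MvPolynomial (Fin 1 × Fin (m+2)) F :=
  MvPolynomial.X ((0 : Fin 1), Fin.last (m+1)) + MvPolynomial.X ((0 : Fin 1), (0 : Fin (m+2)))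

abbrev Sys (F : Type u) [Field F] (m : ℕ) : ZZSystem F 1 where
  nwords := m + 2
  words := wds m
  polys := [q F m (m+1), pτ F m]
  negs := (List.range m).map (fun k => q F m (k+1))

section eval
variable {L : Type u} [Field L] (ι : F →+* L) (σL τL : RingAut L) (x : Fin 1 → L)

lemma eval_q (k : ℕ) (hk : k ≤ m+1) :
    MvPolynomial.eval₂ ι
      (fun p : Fin 1 × Fin (m+2) => (σL ^ (wds m p.2).1 * τL ^ (wds m p.2).2) (x p.1))
      (q F m k) = ∑ j ∈ Finset.range k, (σL ^ j) (x 0) := by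
  set v := fun p : Fin 1 × Fin (m+2) => (σL ^ (wds m p.2).1 * τL ^ (wds m p.2).2) (x p.1) with hv
  rw [show MvPolynomial.eval₂ ι v = ⇑(MvPolynomial.eval₂Hom ι v) from rfl]
  rw [q, map_sum]
  have hterm : ∀ w : Fin (m+2),
      MvPolynomial.eval₂Hom ι v (if (w : ℕ) < k then MvPolynomial.X ((0 : Fin 1), w) else 0)
        = if (w : ℕ) < k then (σL ^ (w : ℕ)) (x 0) else 0 := by
    intro w
    by_cases hw : (w : ℕ) < k
    · rw [if_pos hw, if_pos hw, MvPolynomial.eval₂Hom_X']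
      have hwm : (w : ℕ) ≤ m := by omega
      simp only [hv, wds, if_pos hwm]
      rw [zpow_natCast, zpow_zero, mul_one]
    · rw [if_neg hw, if_neg hw, map_zero]
  rw [Finset.sum_congr rfl (fun w _ => hterm w)]
  rw [Fin.sum_univ_eq_sum_range (fun j : ℕ => if j < k then (σL ^ j) (x 0) else 0) (m+2)]
  rw [← Finset.sum_subset (Finset.range_subset_range.2 (by omega : k ≤ m+2))
    (fun j _ hj => if_neg (fun hc => hj (Finset.mem_range.2 hc)))]
  exact Finset.sum_congr rfl (fun j hj => if_pos (Finset.mem_range.1 hj))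

lemma eval_pτ :
    MvPolynomial.eval₂ ι
      (fun p : Fin 1 × Fin (m+2) => (σL ^ (wds m p.2).1 * τL ^ (wds m p.2).2) (x p.1))
      (pτ F m) = τL (x 0) + x 0 := by
  rw [show MvPolynomial.eval₂ ι _ = ⇑(MvPolynomial.eval₂Hom ι _) from rfl]
  rw [pτ, map_add, MvPolynomial.eval₂Hom_X', MvPolynomial.eval₂Hom_X']
  congr 1
  · simp only [wds, Fin.val_last]
    rw [if_neg (by omega)]
    rw [zpow_zero, zpow_one, one_mul]

end eval

end ZZaux5

namespace ZZaux6
open ZZaux ZZaux2 ZZaux3 ZZaux4 ZZaux5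

variable {F : Type u} [Field F] (m : ℕ)

section generic
variable {L : Type u} [Field L] (ι : F →+* L) (σL τL : RingAut L) (x : Fin 1 → L)

lemma sat_sys
    (h1 : (∑ j ∈ Finset.range (m+1), (σL ^ j) (x 0)) = 0)
    (h2 : τL (x 0) + x 0 = 0)
    (h3 : ∀ k : ℕ, 0 < k → k ≤ m → (∑ j ∈ Finset.range k, (σL ^ j) (x 0)) ≠ 0) :
    (Sys F m).Sat ι σL τL x := by
  constructor
  · intro f hf
    rcases List.mem_cons.1 hf with rfl | hf
    · rw [eval_q ι σL τL x (m+1) (le_refl _)]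
      exact h1
    · rcases List.mem_cons.1 hf with rfl | hf
      · rw [eval_pτ ι σL τL x]
        exact h2
      · exact absurd hf List.not_mem_nil
  · intro g hg
    rcases List.mem_map.1 hg with ⟨k, hk, rfl⟩
    rw [List.mem_range] at hk
    rw [eval_q ι σL τL x (k+1) (by omega)]
    exact h3 (k+1) (Nat.succ_pos k) (by omega)

lemma sat_sys_extract (h : (Sys F m).Sat ι σL τL x) :
    (∑ j ∈ Finset.range (m+1), (σL ^ j) (x 0)) = 0 ∧ (τL (x 0) + x 0 = 0) ∧
      ∀ k : ℕ, 0 < k → k ≤ m → (∑ j ∈ Finset.range k, (σL ^ j) (x 0)) ≠ 0 := by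
  obtain ⟨heq, hne⟩ := h
  refine ⟨?_, ?_, ?_⟩
  · have := heq (q F m (m+1)) (by simp [Sys])
    rwa [eval_q ι σL τL x (m+1) (le_refl _)] at this
  · have := heq (pτ F m) (by simp [Sys])
    rwa [eval_pτ ι σL τL x] at this
  · intro k hk0 hkm
    have hmem : q F m k ∈ (Sys F m).negs := by
      refine List.mem_map.2 ⟨k-1, List.mem_range.2 (by omega), ?_⟩
      congr 1
      omega
    have := hne (q F m k) hmem
    rwa [eval_q ι σL τL x k (by omega)] at this

end generic

variable (σ τ : RingAut F)

/-- The embedding of `F` into the big field. -/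
def ι' : F →+* K F m := (algebraMap (R F m) (K F m)).comp (MvPolynomial.C : F →+* R F m)

lemma compatσ (a : F) : σK m σ (ι' m a) = ι' m (σ a) := by
  show σK m σ (algebraMap (R F m) (K F m) (MvPolynomial.C a)) = _
  rw [σK_alg, Eσ_C]
  rfl

lemma compatτ (a : F) : τK m τ (ι' m a) = ι' m (τ a) := by
  show τK m τ (algebraMap (R F m) (K F m) (MvPolynomial.C a)) = _
  rw [τK_alg, Eτ_C]
  rfl

lemma solvable (hm : 0 < m) : (Sys F m).SolvableIn (ι' m) (σK m σ) (τK m τ) := by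
  refine ⟨fun _ => algebraMap (R F m) (K F m) (t F m 0), ?_⟩
  apply sat_sys
  · have hpow : ∀ j : ℕ, ((σK m σ) ^ j) (algebraMap (R F m) (K F m) (t F m 0)) =
        algebraMap (R F m) (K F m) (t F m ((j : ℕ) : ZMod (m+1))) := by
      intro j; rw [σK_pow_t]; rw [zero_add]
    simp only [hpow]
    rw [← map_sum, sum_range_t, map_zero]
  · show τK m τ (algebraMap (R F m) (K F m) (t F m 0)) +
        algebraMap (R F m) (K F m) (t F m 0) = 0
    rw [τK_t m τ, neg_zero]
    ring
  · intro k hk0 hkm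
    have hpow : ∀ j : ℕ, ((σK m σ) ^ j) (algebraMap (R F m) (K F m) (t F m 0)) =
        algebraMap (R F m) (K F m) (t F m ((j : ℕ) : ZMod (m+1))) := by
      intro j; rw [σK_pow_t]; rw [zero_add]
    simp only [hpow]
    rw [← map_sum]
    have hne := partial_sum_t_ne (F := F) (m := m) k hk0 hkm
    exact fun hc => hne ((map_eq_zero_iff _ (IsFractionRing.injective (R F m) (K F m))).1 hc)

end ZZaux6
end


/-- Let `(F, σ, τ)` be an existentially closed `(ℤ ⋊ ℤ)`-field. Then for every `n > 2`
there exists `c ∈ F` with `τ(c) = -c`, `c + σ(c) + ⋯ + σ^{n-1}(c) = 0`, and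
`c + σ(c) + ⋯ + σ^{k-1}(c) ≠ 0` for all `0 < k < n`. -/
theorem statement9 (F : Type u) [Field F] (σ τ : RingAut F)
    (hec : IsECZZField F σ τ) (n : ℕ) (hn : 2 < n) :
    ∃ c : F, τ c = -c ∧ (∑ j ∈ Finset.range n, (σ ^ j) c) = 0 ∧
      ∀ k : ℕ, 0 < k → k < n → (∑ j ∈ Finset.range k, (σ ^ j) c) ≠ 0 := by
  obtain ⟨m, rfl⟩ : ∃ m, n = m + 1 := ⟨n - 1, by omega⟩
  have hm : 0 < m := by omega
  obtain ⟨x, hx⟩ := hec.2 (ZZaux4.K F m) (ZZaux6.ι' m) (ZZaux4.σK m σ) (ZZaux4.τK m τ)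
    (ZZaux4.rel_K m σ τ hec.1) (ZZaux6.compatσ m σ) (ZZaux6.compatτ m τ) 1 (ZZaux5.Sys F m)
    (ZZaux6.solvable m σ τ hm)
  obtain ⟨h1, h2, h3⟩ := ZZaux6.sat_sys_extract m (RingHom.id F) σ τ x hx
  exact ⟨x 0, eq_neg_of_add_eq_zero_left h2, h1, fun k hk0 hkn => h3 k hk0 (by omega)⟩
end
end

section
/- Let (K, σ) be a difference field and (V, W) a Z-pair. Then the transformal kernel (K(V), K(W), σ′) arising from (V, W) has a prolongation (L, σ̃) which is a difference field extension of (K, σ); in particular there is a difference field extension (L, σ̃) of (K, σ) and a point a ∈ V(L) with (a, σ̃(a)) ∈ W(L). -/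
universe u

noncomputable section

open MvPolynomial

variable {K : Type u} [Field K]

/-- The `σ`-transform `ᔆV` of a variety: the image of its (prime) ideal under the
coefficient-wise action of the automorphism `σ`. -/
def idealTransform {n : Type*} (σ : K ≃+* K) (P : Ideal (MvPolynomial n K)) :
    Ideal (MvPolynomial n K) :=
  P.map (MvPolynomial.map (σ : K →+* K))

/-- The function field `K(V)` of the variety given by the prime ideal `P`. -/
abbrev funField {n : Type*} (P : Ideal (MvPolynomial n K)) :=
  FractionRing (MvPolynomial n K ⧸ P)

/-- The structure embedding `K → K(V)`. -/
def funFieldC {n : Type*} (P : Ideal (MvPolynomial n K)) : K →+* funField P :=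
  (algebraMap (MvPolynomial n K ⧸ P) (funField P)).comp
    ((Ideal.Quotient.mk P).comp MvPolynomial.C)

/-- The coordinate functions of `K(V)`, i.e. the canonical `K`-generic point of `V` in
`V(K(V))`. -/
def funFieldX {n : Type*} (P : Ideal (MvPolynomial n K)) (i : n) : funField P :=
  algebraMap (MvPolynomial n K ⧸ P) (funField P) (Ideal.Quotient.mk P (MvPolynomial.X i))

/-! ### Auxiliary machinery -/

/-- Amalgamation of two field extensions of a common base field. -/
lemma exists_amalgam {A B₁ B₂ : Type u} [Field A] [Field B₁] [Field B₂]
    (u : A →+* B₁) (v : A →+* B₂) :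
    Nonempty (Σ' (C : Type u) (_ : Field C) (g₁ : B₁ →+* C) (g₂ : B₂ →+* C),
      ∀ a, g₁ (u a) = g₂ (v a)) := by
  letI : Algebra A B₁ := u.toAlgebra
  letI : Algebra A B₂ := v.toAlgebra
  haveI : Nontrivial (TensorProduct A B₁ B₂) := inferInstance
  obtain ⟨M, hM⟩ := Ideal.exists_maximal (TensorProduct A B₁ B₂)
  letI := hM
  letI : Field (TensorProduct A B₁ B₂ ⧸ M) := Ideal.Quotient.field M
  refine ⟨⟨TensorProduct A B₁ B₂ ⧸ M, inferInstance,
    (Ideal.Quotient.mk M).comp Algebra.TensorProduct.includeLeftRingHom,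
    (Ideal.Quotient.mk M).comp
      (Algebra.TensorProduct.includeRight (R := A) (A := B₁) (B := B₂)).toRingHom,
    fun a => ?_⟩⟩
  simp only [RingHom.comp_apply]
  congr 1
  show (u a) ⊗ₜ[A] (1 : B₂) = (1 : B₁) ⊗ₜ[A] (v a)
  have h1 : u a = a • (1 : B₁) := by rw [← Algebra.algebraMap_eq_smul_one]; rfl
  have h2 : v a = a • (1 : B₂) := by rw [← Algebra.algebraMap_eq_smul_one]; rfl
  rw [h1, h2, TensorProduct.smul_tmul]

/-- A "link" in a tower of fields: two fields and two embeddings between them. -/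
structure Tw : Type (u + 1) where
  A : Type u
  B : Type u
  [fA : Field A]
  [fB : Field B]
  u : A →+* B
  v : A →+* B

attribute [instance] Tw.fA Tw.fB

/-- One amalgamation step. -/
def twStep (t : Tw.{u}) : Tw.{u} :=
  let am := Classical.choice (exists_amalgam t.u t.v)
  { A := t.B, B := am.1, fA := t.fB, fB := am.2.1, u := am.2.2.2.1, v := am.2.2.1 }

lemma twStep_glue (t : Tw.{u}) (x : t.A) :
    (twStep t).v (t.u x) = (twStep t).u (t.v x) :=
  (Classical.choice (exists_amalgam t.u t.v)).2.2.2.2 x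

/-- The tower of iterated amalgamations. -/
def twTower (t0 : Tw.{u}) : ℕ → Tw.{u}
  | 0 => t0
  | n + 1 => twStep (twTower t0 n)

section Chain

variable {G : ℕ → Type u} [∀ n, CommRing (G n)]

/-- Transition maps of a chain generated by consecutive ring homs. -/
def chainMap (st : ∀ n, G n →+* G (n + 1)) (i j : ℕ) (h : i ≤ j) : G i →+* G j :=
  Nat.leRecOn h (fun {k} (g : G i →+* G k) => (st k).comp g) (RingHom.id (G i))

lemma chainMap_self (st : ∀ n, G n →+* G (n + 1)) {i : ℕ} {h : i ≤ i} (x : G i) :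
    chainMap st i i h x = x := by
  rw [chainMap, Nat.leRecOn_self]; rfl

lemma chainMap_succ (st : ∀ n, G n →+* G (n + 1)) {i j : ℕ} (h : i ≤ j) {h2 : i ≤ j + 1}
    (x : G i) : chainMap st i (j + 1) h2 x = st j (chainMap st i j h x) := by
  rw [chainMap, chainMap, Nat.leRecOn_succ h]; rfl

instance chain_directedSystem (st : ∀ n, G n →+* G (n + 1)) :
    DirectedSystem G (fun i j h x => chainMap st i j h x) := by
  constructor
  · intro i x; exact chainMap_self st x
  · intro k j i hij hjk x
    induction k, hjk using Nat.le_induction with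
    | base => rw [chainMap_self]
    | succ k hjk ih =>
        rw [chainMap_succ st hjk, chainMap_succ st (hij.trans hjk), ih]

lemma chain_compat {P : Type*} [CommRing P] (st : ∀ n, G n →+* G (n + 1))
    (g : ∀ n, G n →+* P) (hg : ∀ n x, g (n + 1) (st n x) = g n x) :
    ∀ (i j : ℕ) (h : i ≤ j) (x : G i), g j (chainMap st i j h x) = g i x := by
  intro i j h
  induction j, h using Nat.le_induction with
  | base => intro x; rw [chainMap_self]
  | succ j hij ih => intro x; rw [chainMap_succ st hij, hg]; exact ih x

end Chain

/-- The direct limit of a tower of fields with a compatible family of "shift" maps carries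
an automorphism realizing the shift. -/
lemma exists_limit_auto (G : ℕ → Type u) [∀ n, Field (G n)] (st vm : ∀ n, G n →+* G (n + 1))
    (glue : ∀ n x, vm (n + 1) (st n x) = st (n + 1) (vm n x)) :
    ∃ (L : Type u) (_ : Field L) (s : L ≃+* L) (of : ∀ n, G n →+* L),
      (∀ n x, of (n + 1) (st n x) = of n x) ∧ (∀ n x, s (of n x) = of (n + 1) (vm n x)) := by
  let L' := Ring.DirectLimit G (fun i j h x => chainMap st i j h x)
  letI : Field L' := Field.DirectLimit.field G (chainMap st)
  let of1 : ∀ n, G n →+* L' := fun n => Ring.DirectLimit.of G _ n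
  have key : ∀ (n : ℕ) (x : G n), st n x = chainMap st n (n + 1) (Nat.le_succ n) x := by
    intro n x; rw [chainMap_succ st le_rfl, chainMap_self]
  have of1_st : ∀ n x, of1 (n + 1) (st n x) = of1 n x := by
    intro n x
    rw [key n x]
    exact Ring.DirectLimit.of_f (Nat.le_succ n) x
  have compat : ∀ (i j : ℕ) (hij : i ≤ j) (x : G i),
      ((of1 (j + 1)).comp (vm j)) (chainMap st i j hij x) = ((of1 (i + 1)).comp (vm i)) x :=
    chain_compat st (fun n => (of1 (n + 1)).comp (vm n)) (by
      intro n x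
      simp only [RingHom.comp_apply]
      rw [glue n x, of1_st])
  let s' : L' →+* L' :=
    Ring.DirectLimit.lift G _ L' (fun n => (of1 (n + 1)).comp (vm n)) compat
  have s'_of : ∀ n x, s' (of1 n x) = of1 (n + 1) (vm n x) := by
    intro n x
    exact Ring.DirectLimit.lift_of (P := L') (g := fun n => (of1 (n + 1)).comp (vm n))
      (Hg := compat) n x
  let G2 : ℕ → Type u := fun _ => L'
  let st2 : ∀ n, G2 n →+* G2 (n + 1) := fun _ => s'
  let L : Type u := Ring.DirectLimit G2 (fun i j h x => chainMap st2 i j h x)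
  letI : Field L := Field.DirectLimit.field G2 (chainMap st2)
  let of2 : ∀ n, G2 n →+* L := fun n => Ring.DirectLimit.of G2 _ n
  have key2 : ∀ (n : ℕ) (x : G2 n), st2 n x = chainMap st2 n (n + 1) (Nat.le_succ n) x := by
    intro n x; rw [chainMap_succ st2 le_rfl, chainMap_self]
  have of2_st : ∀ n x, of2 (n + 1) (s' x) = of2 n x := by
    intro n x
    rw [show s' x = chainMap st2 n (n + 1) (Nat.le_succ n) x from key2 n x]
    exact Ring.DirectLimit.of_f (G := G2) (f := fun i j h x => chainMap st2 i j h x)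
      (Nat.le_succ n) x
  let fwd : L →+* L :=
    Ring.DirectLimit.lift G2 _ L (fun n => (of2 n).comp s')
      (chain_compat st2 (fun n => (of2 n).comp s') (by
        intro n x
        simp only [RingHom.comp_apply]
        exact of2_st n (s' x)))
  let bwd : L →+* L :=
    Ring.DirectLimit.lift G2 _ L (fun n => of2 (n + 1))
      (chain_compat st2 (fun n => of2 (n + 1)) (by
        intro n x
        exact of2_st (n + 1) x))
  have fwd_of : ∀ n x, fwd (of2 n x) = of2 n (s' x) := by
    intro n x
    exact Ring.DirectLimit.lift_of (P := L) (g := fun n => (of2 n).comp s')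
      (Hg := chain_compat st2 (fun n => (of2 n).comp s') (by
        intro n x
        simp only [RingHom.comp_apply]
        exact of2_st n (s' x))) n x
  have bwd_of : ∀ n x, bwd (of2 n x) = of2 (n + 1) x := by
    intro n x
    exact Ring.DirectLimit.lift_of (P := L) (g := fun n => of2 (n + 1))
      (Hg := chain_compat st2 (fun n => of2 (n + 1)) (by
        intro n x
        exact of2_st (n + 1) x)) n x
  have h1 : bwd.comp fwd = RingHom.id L := by
    apply RingHom.ext
    intro z
    refine Ring.DirectLimit.induction_on z ?_
    intro i x
    simp only [RingHom.comp_apply, RingHom.id_apply]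
    rw [fwd_of, bwd_of, of2_st]
  have h2 : fwd.comp bwd = RingHom.id L := by
    apply RingHom.ext
    intro z
    refine Ring.DirectLimit.induction_on z ?_
    intro i x
    simp only [RingHom.comp_apply, RingHom.id_apply]
    rw [bwd_of, fwd_of, of2_st]
  let S : L ≃+* L := RingEquiv.ofRingHom fwd bwd h2 h1
  refine ⟨L, inferInstance, S, fun n => (of2 0).comp (of1 n), ?_, ?_⟩
  · intro n x
    simp only [RingHom.comp_apply]
    rw [of1_st]
  · intro n x
    simp only [RingHom.comp_apply]
    have : S ((of2 0) ((of1 n) x)) = fwd ((of2 0) ((of1 n) x)) := rfl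
    rw [this, fwd_of, s'_of]



set_option maxHeartbeats 2000000 in
set_option synthInstance.maxHeartbeats 1000000 in
/-- Let `(K, σ)` be a difference field and `(V, W)` a `ℤ`-pair, given by prime ideals
`P`, `Q` (with `W ⊆ V × ᔆV` and dominant projections, expressed by the contraction
conditions below). Then the transformal kernel `(K(V), K(W), σ′)` arising from `(V, W)`
has a prolongation `(L, σ̃)` which is a difference field extension of `(K, σ)`: there is a
field `L`, an automorphism `σ̃` of `L`, and an embedding `j : K(W) → L` such that `σ̃`
extends `σ` (via the structure embedding of `K`) and extends the kernel map `σ′` (i.e. on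
the canonical generic point `a` of `V` inside `K(W)` it takes the `V`-coordinates to the
`ᔆV`-coordinates); in particular `a ∈ V(L)` and `(a, σ̃(a)) ∈ W(L)`. -/
theorem statement15 {m : ℕ} (K : Type u) [Field K] (σ : K ≃+* K)
    (P : Ideal (MvPolynomial (Fin m) K)) [P.IsPrime]
    (Q : Ideal (MvPolynomial (Fin m ⊕ Fin m) K)) [Q.IsPrime]
    (hdom1 : Q.comap (MvPolynomial.rename (Sum.inl : Fin m → Fin m ⊕ Fin m)).toRingHom
      = P)
    (hdom2 : Q.comap (MvPolynomial.rename (Sum.inr : Fin m → Fin m ⊕ Fin m)).toRingHom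
      = idealTransform σ P) :
    ∃ (L : Type u) (_ : Field L) (s : L ≃+* L) (j : funField Q →+* L),
      -- `(L, s)` is a difference field extension of `(K, σ)`
      (∀ k : K, s (j (funFieldC Q k)) = j (funFieldC Q (σ k))) ∧
      -- `s` prolongs the kernel map `σ′ : K(V) → K(W)`
      (∀ i : Fin m, s (j (funFieldX Q (Sum.inl i))) = j (funFieldX Q (Sum.inr i))) ∧
      -- the point `a := j(x_V) ∈ V(L)`
      (∀ f ∈ P, MvPolynomial.eval₂ ((j : funField Q →+* L).comp (funFieldC Q))
        (fun i => j (funFieldX Q (Sum.inl i))) f = 0) ∧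
      -- and `(a, s(a)) ∈ W(L)`
      (∀ f ∈ Q, MvPolynomial.eval₂ ((j : funField Q →+* L).comp (funFieldC Q))
        (Sum.elim (fun i => j (funFieldX Q (Sum.inl i)))
          (fun i => s (j (funFieldX Q (Sum.inl i))))) f = 0) := by
  classical
  -- the quotient-then-fraction map for `Q`
  set ψ : MvPolynomial (Fin m ⊕ Fin m) K →+* funField Q :=
    (algebraMap (MvPolynomial (Fin m ⊕ Fin m) K ⧸ Q) (funField Q)).comp
      (Ideal.Quotient.mk Q) with hψdef
  have hψ0 : ∀ z ∈ Q, ψ z = 0 := by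
    intro z hz
    simp only [hψdef, RingHom.comp_apply]
    rw [Ideal.Quotient.eq_zero_iff_mem.2 hz, map_zero]
  have hψker : ∀ z, ψ z = 0 → z ∈ Q := by
    intro z hz
    simp only [hψdef, RingHom.comp_apply] at hz
    have hinj := IsFractionRing.injective (MvPolynomial (Fin m ⊕ Fin m) K ⧸ Q) (funField Q)
    rw [← map_zero (algebraMap (MvPolynomial (Fin m ⊕ Fin m) K ⧸ Q) (funField Q))] at hz
    have := hinj hz
    rwa [← Ideal.Quotient.eq_zero_iff_mem]
  have hψeval : ∀ z, ψ z = MvPolynomial.eval₂ (funFieldC Q) (funFieldX Q) z := by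
    intro z
    have h := MvPolynomial.eval₂_comp_left ψ MvPolynomial.C MvPolynomial.X z
    rw [MvPolynomial.eval₂_eta] at h
    rw [h]
    rfl
  -- the inclusion `ι : K(V) → K(W)`
  set q1 : MvPolynomial (Fin m) K →+* funField Q :=
    ψ.comp (MvPolynomial.rename (Sum.inl : Fin m → Fin m ⊕ Fin m)).toRingHom with hq1def
  have hq1 : ∀ f ∈ P, q1 f = 0 := by
    intro f hf
    rw [← hdom1] at hf
    exact hψ0 _ (Ideal.mem_comap.1 hf)
  set ι0 : (MvPolynomial (Fin m) K ⧸ P) →+* funField Q := Ideal.Quotient.lift P q1 hq1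
    with hι0def
  have hι0inj : Function.Injective ι0 := by
    rw [injective_iff_map_eq_zero]
    intro a ha
    obtain ⟨x, rfl⟩ := Ideal.Quotient.mk_surjective a
    rw [hι0def, Ideal.Quotient.lift_mk] at ha
    have hx : (MvPolynomial.rename (Sum.inl : Fin m → Fin m ⊕ Fin m)).toRingHom x ∈ Q :=
      hψker _ ha
    rw [Ideal.Quotient.eq_zero_iff_mem, ← hdom1]
    exact Ideal.mem_comap.2 hx
  set ι : funField P →+* funField Q := IsFractionRing.lift hι0inj with hιdef
  have hι : ∀ x, ι (algebraMap (MvPolynomial (Fin m) K ⧸ P) (funField P)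
      (Ideal.Quotient.mk P x)) = ψ (MvPolynomial.rename Sum.inl x) := by
    intro x
    rw [hιdef, IsFractionRing.lift_algebraMap, hι0def, Ideal.Quotient.lift_mk]
    rfl
  -- the twisted map `σ' : K(V) → K(W)`
  set mσ : MvPolynomial (Fin m) K →+* MvPolynomial (Fin m) K :=
    MvPolynomial.map (σ : K →+* K) with hmσdef
  have hmσbij : Function.Bijective mσ := (MvPolynomial.mapEquiv (Fin m) σ).bijective
  have hPmem : ∀ x, x ∈ P ↔ mσ x ∈ idealTransform σ P := by
    intro x
    constructor
    · intro h
      exact Ideal.mem_map_of_mem _ h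
    · intro h
      have hc := Ideal.comap_map_of_bijective mσ hmσbij (I := P)
      rw [← hc]
      exact Ideal.mem_comap.2 h
  set q2 : MvPolynomial (Fin m) K →+* funField Q :=
    ψ.comp ((MvPolynomial.rename (Sum.inr : Fin m → Fin m ⊕ Fin m)).toRingHom.comp mσ)
    with hq2def
  have hq2 : ∀ f ∈ P, q2 f = 0 := by
    intro f hf
    have h1 : mσ f ∈ idealTransform σ P := (hPmem f).1 hf
    rw [← hdom2] at h1
    exact hψ0 _ (Ideal.mem_comap.1 h1)
  set σ0 : (MvPolynomial (Fin m) K ⧸ P) →+* funField Q := Ideal.Quotient.lift P q2 hq2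
    with hσ0def
  have hσ0inj : Function.Injective σ0 := by
    rw [injective_iff_map_eq_zero]
    intro a ha
    obtain ⟨x, rfl⟩ := Ideal.Quotient.mk_surjective a
    rw [hσ0def, Ideal.Quotient.lift_mk] at ha
    have hx : (MvPolynomial.rename (Sum.inr : Fin m → Fin m ⊕ Fin m)).toRingHom (mσ x) ∈ Q :=
      hψker _ ha
    have h2 : mσ x ∈ idealTransform σ P := by
      rw [← hdom2]
      exact Ideal.mem_comap.2 hx
    rw [Ideal.Quotient.eq_zero_iff_mem]
    exact (hPmem x).2 h2
  set σ' : funField P →+* funField Q := IsFractionRing.lift hσ0inj with hσ'def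
  have hσ' : ∀ x, σ' (algebraMap (MvPolynomial (Fin m) K ⧸ P) (funField P)
      (Ideal.Quotient.mk P x)) = ψ (MvPolynomial.rename Sum.inr (mσ x)) := by
    intro x
    rw [hσ'def, IsFractionRing.lift_algebraMap, hσ0def, Ideal.Quotient.lift_mk]
    rfl
  -- evaluation of the two maps on constants and coordinates
  have hιC : ∀ k : K, ι (funFieldC P k) = funFieldC Q k := by
    intro k
    have h := hι (MvPolynomial.C k)
    rw [show funFieldC P k = algebraMap (MvPolynomial (Fin m) K ⧸ P) (funField P)
      (Ideal.Quotient.mk P (MvPolynomial.C k)) from rfl, h, MvPolynomial.rename_C]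
    rfl
  have hιX : ∀ i : Fin m, ι (funFieldX P i) = funFieldX Q (Sum.inl i) := by
    intro i
    have h := hι (MvPolynomial.X i)
    rw [funFieldX, h, MvPolynomial.rename_X]
    rfl
  have hσC : ∀ k : K, σ' (funFieldC P k) = funFieldC Q (σ k) := by
    intro k
    have h := hσ' (MvPolynomial.C k)
    rw [show funFieldC P k = algebraMap (MvPolynomial (Fin m) K ⧸ P) (funField P)
      (Ideal.Quotient.mk P (MvPolynomial.C k)) from rfl, h, hmσdef, MvPolynomial.map_C,
      MvPolynomial.rename_C]
    rfl
  have hσX : ∀ i : Fin m, σ' (funFieldX P i) = funFieldX Q (Sum.inr i) := by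
    intro i
    have h := hσ' (MvPolynomial.X i)
    rw [funFieldX, h, hmσdef, MvPolynomial.map_X, MvPolynomial.rename_X]
    rfl
  -- the tower of amalgamations
  let t0 : Tw.{u} := { A := funField P, B := funField Q, u := ι, v := σ' }
  let T : ℕ → Tw.{u} := twTower t0
  let G : ℕ → Type u := fun n => (T n).B
  letI : ∀ n, Field (G n) := fun n => (T n).fB
  let st : ∀ n, G n →+* G (n + 1) := fun n => (T (n + 1)).u
  let vm : ∀ n, G n →+* G (n + 1) := fun n => (T (n + 1)).v
  have glue : ∀ n x, vm (n + 1) (st n x) = st (n + 1) (vm n x) := fun n x =>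
    twStep_glue (T (n + 1)) x
  obtain ⟨L, fL, s, of, hof_st, hs_of⟩ := exists_limit_auto G st vm glue
  let j : funField Q →+* L := of 0
  have master : ∀ x : funField P, s (j (ι x)) = j (σ' x) := by
    intro x
    have h1 := hs_of 0 (ι x)
    have h2 : vm 0 (ι x) = st 0 (σ' x) := twStep_glue t0 x
    have h3 := hof_st 0 (σ' x)
    rw [show j (ι x) = of 0 (ι x) from rfl, h1, h2]
    exact h3
  -- the four conclusions
  have b1 : ∀ k : K, s (j (funFieldC Q k)) = j (funFieldC Q (σ k)) := by
    intro k
    have h := master (funFieldC P k)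
    rwa [hιC, hσC] at h
  have b2 : ∀ i : Fin m, s (j (funFieldX Q (Sum.inl i))) = j (funFieldX Q (Sum.inr i)) := by
    intro i
    have h := master (funFieldX P i)
    rwa [hιX, hσX] at h
  refine ⟨L, fL, s, j, b1, b2, ?_, ?_⟩
  · intro f hf
    have hcl : MvPolynomial.eval₂ (j.comp (funFieldC Q))
        (fun i => j (funFieldX Q (Sum.inl i))) f
        = j (MvPolynomial.eval₂ (funFieldC Q) (fun i => funFieldX Q (Sum.inl i)) f) :=
      (MvPolynomial.eval₂_comp_left j (funFieldC Q)
        (fun i => funFieldX Q (Sum.inl i)) f).symm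
    rw [hcl]
    have h5 : MvPolynomial.eval₂ (funFieldC Q) (fun i => funFieldX Q (Sum.inl i)) f
        = ψ (MvPolynomial.rename Sum.inl f) := by
      rw [hψeval, MvPolynomial.eval₂_rename]
      rfl
    rw [h5, hψ0 _ (by rw [← hdom1] at hf; exact Ideal.mem_comap.1 hf), map_zero]
  · intro f hf
    have hpt : (Sum.elim (fun i => j (funFieldX Q (Sum.inl i)))
        (fun i => s (j (funFieldX Q (Sum.inl i)))))
        = fun x => j (funFieldX Q x) := by
      funext x
      cases x with
      | inl i => rfl
      | inr i => exact b2 i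
    rw [hpt]
    have hcl : MvPolynomial.eval₂ (j.comp (funFieldC Q)) (fun x => j (funFieldX Q x)) f
        = j (MvPolynomial.eval₂ (funFieldC Q) (funFieldX Q) f) :=
      (MvPolynomial.eval₂_comp_left j (funFieldC Q) (funFieldX Q) f).symm
    rw [hcl, ← hψeval, hψ0 _ hf, map_zero]
end
end

section
/- Let G be a finitely generated commutative group. Then Z × Z embeds in G as a direct summand if and only if G is not virtually free; consequently (granting that (Z×Z)-TCF and more generally ((Z⋊Z)⋊H)-TCF do not exist, while G-TCF exists for virtually free G), the theory G-TCF exists if and only if G is virtually free. -/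
universe u

/-- A group is virtually free if it has a free subgroup of finite index. -/
def VirtuallyFree (G : Type u) [Group G] : Prop :=
  ∃ H : Subgroup G, H.FiniteIndex ∧ Nonempty (IsFreeGroup H)

/-- `ℤ × ℤ` is a direct summand of `G`: there are subgroups `H, K` with `G = H × K`
internally and `H ≅ ℤ × ℤ`. -/
def HasZxZSummand (G : Type u) [Group G] : Prop :=
  ∃ H K : Subgroup G, IsCompl H K ∧ Nonempty (H ≃* Multiplicative (ℤ × ℤ))

open Subgroup

section Aux

/-- A commutative free group is generated by a single element. -/
lemma exists_zpowers_of_comm_free {K : Type*} [Group K] [IsFreeGroup K]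
    (hcomm : ∀ a b : K, a * b = b * a) :
    ∃ g : K, ∀ x : K, x ∈ Subgroup.zpowers g := by
  classical
  obtain ⟨ι, ⟨b⟩⟩ := IsFreeGroup.nonempty_basis (G := K)
  have hsub : Subsingleton ι := by
    by_contra h
    rw [not_subsingleton_iff_nontrivial] at h
    obtain ⟨x, y, hxy⟩ := h.exists_pair_ne
    set f : ι → Equiv.Perm (Fin 3) := fun z => if z = x then Equiv.swap 0 1 else Equiv.swap 0 2
    have hco : FreeGroup.of x * FreeGroup.of y = FreeGroup.of y * FreeGroup.of x := by
      apply b.repr.symm.injective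
      simp only [map_mul]
      exact hcomm _ _
    have := congrArg (FreeGroup.lift f) hco
    simp only [map_mul, FreeGroup.lift_apply_of] at this
    have hfx : f x = Equiv.swap 0 1 := by simp [f]
    have hfy : f y = Equiv.swap 0 2 := by simp [f, hxy.symm]
    rw [hfx, hfy] at this
    exact absurd this (by decide)
  rcases isEmpty_or_nonempty ι with hι | hι
  · refine ⟨1, fun x => ?_⟩
    have : ∀ w : FreeGroup ι, w = 1 := by
      intro w
      induction w using FreeGroup.induction_on with
      | C1 => rfl
      | of x => exact isEmptyElim x
      | inv_of x _ => simp_all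
      | mul x y hx hy => simp [hx, hy]
    have hx : x = 1 := by
      have := this (b.repr x)
      simpa using congrArg b.repr.symm this
    simp [hx]
  · obtain ⟨x₀⟩ := hι
    refine ⟨b.repr.symm (FreeGroup.of x₀), fun x => ?_⟩
    have : ∀ w : FreeGroup ι, b.repr.symm w ∈ zpowers (b.repr.symm (FreeGroup.of x₀)) := by
      intro w
      induction w using FreeGroup.induction_on with
      | C1 => simpa using one_mem _
      | of z => rw [Subsingleton.elim z x₀]; exact mem_zpowers _
      | inv_of z hz => rw [map_inv]; exact inv_mem hz
      | mul z w hz hw => rw [map_mul]; exact mul_mem hz hw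
    simpa using this (b.repr x)

/-- `ℤ × ℤ` has no finite-index subgroup contained in the powers of a single element. -/
lemma zxz_no_finiteIndex_monogenic (J : Subgroup (Multiplicative (ℤ × ℤ)))
    (hJ : J.FiniteIndex) (g : Multiplicative (ℤ × ℤ))
    (hg : ∀ x ∈ J, x ∈ Subgroup.zpowers g) : False := by
  have hn : J.index ≠ 0 := hJ.index_ne_zero
  set n : ℕ := J.index
  set a : Multiplicative (ℤ × ℤ) := Multiplicative.ofAdd ((1 : ℤ), (0 : ℤ))
  set b : Multiplicative (ℤ × ℤ) := Multiplicative.ofAdd ((0 : ℤ), (1 : ℤ))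
  have ha : a ^ n ∈ J := J.pow_index_mem a
  have hb : b ^ n ∈ J := J.pow_index_mem b
  obtain ⟨k₁, hk₁⟩ := Subgroup.mem_zpowers_iff.1 (hg _ ha)
  obtain ⟨k₂, hk₂⟩ := Subgroup.mem_zpowers_iff.1 (hg _ hb)
  have key : (a ^ n) ^ k₂ = (b ^ n) ^ k₁ := by
    rw [← hk₁, ← hk₂, ← zpow_mul, ← zpow_mul, mul_comm]
  have key2 : (k₂ = 0 ∨ n = 0) ∧ (k₁ = 0 ∨ n = 0) := by
    have := congrArg Multiplicative.toAdd key
    simpa [a, b, smul_smul] using this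
  have hk10 : k₁ = 0 := key2.2.resolve_right hn
  have : a ^ n = 1 := by rw [← hk₁, hk10, zpow_zero]
  have h := congrArg Multiplicative.toAdd this
  simp [a] at h
  exact hn h

lemma exists_zpowers_of_equiv {A B : Type*} [Group A] [Group B] (e : A ≃* B)
    (h : ∃ g : B, ∀ x : B, x ∈ Subgroup.zpowers g) :
    ∃ g : A, ∀ x : A, x ∈ Subgroup.zpowers g := by
  obtain ⟨g, hgg⟩ := h
  refine ⟨e.symm g, fun x => ?_⟩
  obtain ⟨k, hk⟩ := Subgroup.mem_zpowers_iff.1 (hgg (e x))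
  exact Subgroup.mem_zpowers_iff.2 ⟨k, by
    have := congrArg e.symm hk
    simpa [map_zpow] using this⟩

/-- A commutative group containing a copy of `ℤ × ℤ` is not virtually free. -/
lemma not_virtuallyFree_of_embed {G : Type u} [CommGroup G]
    (φ : Multiplicative (ℤ × ℤ) →* G) (hφ : Function.Injective φ) :
    ¬ VirtuallyFree G := by
  rintro ⟨H, hHfi, ⟨hfree⟩⟩
  set J : Subgroup (Multiplicative (ℤ × ℤ)) := H.comap φ with hJdef
  haveI : (H.subgroupOf φ.range).FiniteIndex := Subgroup.instFiniteIndex_subgroupOf H φ.range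
  have hJfi : J.FiniteIndex := ⟨by
    rw [hJdef, Subgroup.index_comap]
    exact Subgroup.FiniteIndex.index_ne_zero⟩
  have hle : J.map φ ≤ H := Subgroup.map_comap_le φ H
  set K : Subgroup H := (J.map φ).subgroupOf H with hKdef
  haveI : IsFreeGroup K := inferInstance
  have hcomm : ∀ a b : K, a * b = b * a := by
    intro a b
    apply Subtype.ext; apply Subtype.ext
    push_cast
    exact mul_comm _ _
  have hmono := exists_zpowers_of_comm_free (K := K) hcomm
  have e1 : J ≃* J.map φ := J.equivMapOfInjective φ hφ
  have e2 : (J.map φ) ≃* K := (Subgroup.subgroupOfEquivOfLe hle).symm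
  have hJmono : ∃ g : J, ∀ x : J, x ∈ Subgroup.zpowers g :=
    exists_zpowers_of_equiv (e1.trans e2) hmono
  obtain ⟨g, hgg⟩ := hJmono
  refine zxz_no_finiteIndex_monogenic J hJfi (g : Multiplicative (ℤ × ℤ)) ?_
  intro x hx
  obtain ⟨k, hk⟩ := Subgroup.mem_zpowers_iff.1 (hgg ⟨x, hx⟩)
  exact Subgroup.mem_zpowers_iff.2 ⟨k, by
    have := congrArg (Subtype.val) hk
    simpa using this⟩

lemma isCompl_range_inl_inr {P Q : Type*} [Group P] [Group Q] :
    IsCompl (MonoidHom.inl P Q).range (MonoidHom.inr P Q).range := by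
  constructor
  · rw [Subgroup.disjoint_def]
    rintro x ⟨p, rfl⟩ ⟨q, hq⟩
    have hp : p = 1 := (Prod.ext_iff.1 hq).1.symm
    simp [hp]
  · rw [codisjoint_iff, eq_top_iff]
    rintro ⟨p, q⟩ -
    have : ((p, q) : P × Q) = (p, 1) * (1, q) := by simp
    rw [this]
    exact mul_mem (Subgroup.mem_sup_left ⟨p, rfl⟩) (Subgroup.mem_sup_right ⟨q, rfl⟩)

lemma hasZxZSummand_of_equiv {G : Type u} [Group G] {C : Type*} [Group C]
    (e : G ≃* Multiplicative (ℤ × ℤ) × C) : HasZxZSummand G := by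
  refine ⟨(MonoidHom.inl _ _).range.comap e.toMonoidHom,
    (MonoidHom.inr _ _).range.comap e.toMonoidHom,
    ?_, ?_⟩
  · exact (e.comapSubgroup : Subgroup (Multiplicative (ℤ × ℤ) × C) ≃o Subgroup G).isCompl
      isCompl_range_inl_inr
  · refine ⟨?_⟩
    have h1 : (MonoidHom.inl _ _).range.comap e.toMonoidHom
        = (MonoidHom.inl (Multiplicative (ℤ × ℤ)) C).range.map e.symm.toMonoidHom :=
      Subgroup.comap_equiv_eq_map_symm e _
    have hinj : Function.Injective (MonoidHom.inl (Multiplicative (ℤ × ℤ)) C) :=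
      fun a b h => (Prod.ext_iff.1 h).1
    exact (MulEquiv.subgroupCongr h1).trans
      (((e.symm.subgroupMap _).symm).trans (MonoidHom.ofInjective hinj).symm)

lemma isFreeGroup_of_unique {P : Type*} [Group P] [Unique P] : IsFreeGroup P := by
  haveI : Unique (FreeGroup (Empty : Type _)) := by
    refine ⟨⟨1⟩, fun w => ?_⟩
    induction w using FreeGroup.induction_on with
    | C1 => rfl
    | of x => exact isEmptyElim x
    | inv_of x _ => simp_all
    | mul x y hx hy =>
        rw [hx, hy]
        exact mul_one _
  exact IsFreeGroup.ofMulEquiv (G := FreeGroup (Empty : Type _))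
    (MulEquiv.ofUnique)

lemma isFreeGroup_multiplicative_int : IsFreeGroup (Multiplicative ℤ) := by
  refine IsFreeGroup.ofMulEquiv (G := FreeGroup Unit) (MonoidHom.toMulEquiv
    (FreeGroup.lift fun _ => Multiplicative.ofAdd (1 : ℤ))
    (zpowersHom _ (FreeGroup.of ())) ?_ ?_)
  · apply FreeGroup.ext_hom
    intro a
    simp [zpowersHom_apply]
  · apply MonoidHom.ext_mint
    simp [zpowersHom_apply]

lemma virtuallyFree_of_equiv_prod {G : Type u} [Group G] {P Q : Type*} [Group P] [Group Q]
    [IsFreeGroup P] [Finite Q] (e : G ≃* P × Q) : VirtuallyFree G := by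
  set S : Subgroup (P × Q) := (⊤ : Subgroup P).prod ⊥ with hS
  refine ⟨S.comap e.toMonoidHom, ⟨?_⟩, ⟨?_⟩⟩
  · rw [Subgroup.index_comap_of_surjective _ e.surjective, hS, Subgroup.index_prod]
    simp only [Subgroup.index_top, one_mul, Subgroup.index_bot]
    exact Nat.card_pos.ne'
  · have h1 : S.comap e.toMonoidHom = S.map e.symm.toMonoidHom :=
      Subgroup.comap_equiv_eq_map_symm e _
    have eqv1 : ((S.comap e.toMonoidHom : Subgroup G) : Type _) ≃* S :=
      (MulEquiv.subgroupCongr h1).trans (e.symm.subgroupMap _).symm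
    have eqv2 : S ≃* P :=
      (Subgroup.prodEquiv _ _).trans
        ((Subgroup.topEquiv.prodCongr (MulEquiv.refl _)).trans MulEquiv.prodUnique)
    exact IsFreeGroup.ofMulEquiv (eqv1.trans eqv2).symm

end Aux

/-- Let `G` be a finitely generated commutative group. Then `ℤ × ℤ` embeds in `G` as a
direct summand if and only if `G` is not virtually free; consequently — granting that
`G-TCF` does not exist whenever `ℤ × ℤ` is a direct summand of `G`, while `G-TCF` exists
for finitely generated virtually free `G` — the theory `G-TCF` exists if and only if `G`
is virtually free. -/
theorem statement16 {G : Type u} [CommGroup G] (hfg : Group.FG G)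
    (TCFexists : ∀ (A : Type u) [Group A], Prop)
    (h1 : ∀ (A : Type u) [Group A], Group.FG A → VirtuallyFree A → TCFexists A)
    (h2 : ∀ (A : Type u) [Group A], HasZxZSummand A → ¬ TCFexists A) :
    (HasZxZSummand G ↔ ¬ VirtuallyFree G) ∧ (TCFexists G ↔ VirtuallyFree G) := by
  have key1 : HasZxZSummand G → ¬ VirtuallyFree G := by
    rintro ⟨H, K, hcompl, ⟨eH⟩⟩
    exact not_virtuallyFree_of_embed (H.subtype.comp eH.symm.toMonoidHom)
      (H.subtype_injective.comp eH.symm.injective)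
  have key2 : HasZxZSummand G ∨ VirtuallyFree G := by
    haveI : AddGroup.FG (Additive G) := GroupFG.iff_add_fg.1 hfg
    obtain ⟨n, ι, fι, p, hp, ex, ⟨f⟩⟩ := AddCommGroup.equiv_free_prod_directSum_zmod (Additive G)
    haveI := fι
    haveI : ∀ i, NeZero (p i ^ ex i) := fun i => ⟨pow_ne_zero _ (hp i).ne_zero⟩
    set D := DirectSum ι fun i => ZMod (p i ^ ex i) with hD
    haveI : Finite D := Finite.of_equiv _ (DFinsupp.equivFunOnFintype (ι := ι)).symm
    have mulE : G ≃* Multiplicative ((Fin n →₀ ℤ) × D) :=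
      (MulEquiv.multiplicativeAdditive G).symm.trans (AddEquiv.toMultiplicative f)
    rcases lt_or_ge n 2 with hn | hn
    · right
      haveI : IsFreeGroup (Multiplicative (Fin n →₀ ℤ)) := by
        interval_cases n
        · exact isFreeGroup_of_unique
        · haveI := isFreeGroup_multiplicative_int
          exact IsFreeGroup.ofMulEquiv (AddEquiv.toMultiplicative
            ((Finsupp.LinearEquiv.finsuppUnique ℤ ℤ (Fin 1)).toAddEquiv).symm)
      exact virtuallyFree_of_equiv_prod (mulE.trans (MulEquiv.prodMultiplicative _ _))
    · left
      obtain ⟨m, rfl⟩ : ∃ m, n = 2 + m := ⟨n - 2, by omega⟩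
      have e1 : (Fin (2 + m) →₀ ℤ) ≃+ ((Fin 2 ⊕ Fin m) →₀ ℤ) :=
        Finsupp.domCongr finSumFinEquiv.symm
      have e2 : ((Fin 2 ⊕ Fin m) →₀ ℤ) ≃+ (Fin 2 →₀ ℤ) × (Fin m →₀ ℤ) :=
        Finsupp.sumFinsuppAddEquivProdFinsupp
      have e3 : (Fin 2 →₀ ℤ) ≃+ ℤ × ℤ :=
        Finsupp.addEquivFunOnFinite.trans
          { piFinTwoEquiv (fun _ => ℤ) with map_add' := fun _ _ => rfl }
      have addE : ((Fin (2 + m) →₀ ℤ) × D) ≃+ (ℤ × ℤ) × ((Fin m →₀ ℤ) × D) :=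
        (AddEquiv.prodCongr
          ((e1.trans e2).trans (AddEquiv.prodCongr e3 (AddEquiv.refl _)))
          (AddEquiv.refl D)).trans AddEquiv.prodAssoc
      exact hasZxZSummand_of_equiv
        ((mulE.trans (AddEquiv.toMultiplicative addE)).trans (MulEquiv.prodMultiplicative _ _))
  rcases key2 with hZ | hVF
  · have hnVF := key1 hZ
    exact ⟨⟨fun _ => hnVF, fun _ => hZ⟩,
      ⟨fun ht => ((h2 G hZ) ht).elim, fun hv => (hnVF hv).elim⟩⟩
  · exact ⟨⟨fun hZ => key1 hZ, fun hn => (hn hVF).elim⟩,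
      ⟨fun _ => hVF, fun hv => h1 G hfg hv⟩⟩
end
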